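/- Let X = UUᵀ and X* = U*(U*)ᵀ with U, U* ∈ ℝ^{n×r}. If Dist(U, U*) ≤ ρ·σ_r(U*) for some ρ > 0, then ‖X − X*‖_F ≤ (2 + ρ)·ρ·‖U*‖₂·σ_r(U*). -/

import Mathlib

open Matrix

noncomputable def vnorm {m : Type*} [Fintype m] (v : m → ℝ) : ℝ :=
  Real.sqrt (∑ i, v i ^ 2)

noncomputable def frob {m n : Type*} [Fintype m] [Fintype n] (A : Matrix m n ℝ) : ℝ :=
  Real.sqrt (∑ i, ∑ j, A i j ^ 2)

/-- The spectral norm (largest singular value) of a real matrix. -/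
noncomputable def specNorm {m n : Type*} [Fintype m] [Fintype n] (A : Matrix m n ℝ) : ℝ :=
  sSup {c | ∃ x : n → ℝ, vnorm x = 1 ∧ c = vnorm (A.mulVec x)}

/-- The smallest singular value of a real matrix. -/
noncomputable def sigMin {m n : Type*} [Fintype m] [Fintype n] (A : Matrix m n ℝ) : ℝ :=
  sInf {c | ∃ x : n → ℝ, vnorm x = 1 ∧ c = vnorm (A.mulVec x)}

/-- `Dist U V`: the infimum of `‖U - V R‖_F` over orthogonal `R`. -/
noncomputable def FDist {n r : Type*} [Fintype n] [Fintype r] [DecidableEq r]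
    (U V : Matrix n r ℝ) : ℝ :=
  sInf {c | ∃ R : Matrix r r ℝ, Rᵀ * R = 1 ∧ c = frob (U - V * R)}

/-- The `i`-th largest singular value of a real matrix. -/
noncomputable def singVal {n m : ℕ} (A : Matrix (Fin n) (Fin m) ℝ) (i : Fin m) : ℝ :=
  Real.sqrt ((Matrix.isHermitian_conjTranspose_mul_self A).eigenvalues
    ((Tuple.sort (Matrix.isHermitian_conjTranspose_mul_self A).eigenvalues) i.rev))

section lemmas
variable {m k p : Type*} [Fintype m] [Fintype k] [Fintype p]

lemma vnorm_nonneg (v : m → ℝ) : 0 ≤ vnorm v := Real.sqrt_nonneg _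
lemma frob_nonneg (A : Matrix m k ℝ) : 0 ≤ frob A := Real.sqrt_nonneg _

lemma vnorm_sq (v : m → ℝ) : vnorm v ^ 2 = ∑ i, v i ^ 2 :=
  Real.sq_sqrt (Finset.sum_nonneg fun _ _ => sq_nonneg _)

lemma vnorm_eq_norm (v : m → ℝ) : vnorm v = ‖(WithLp.equiv 2 (m → ℝ)).symm v‖ := by
  rw [EuclideanSpace.norm_eq]
  simp [vnorm, Real.norm_eq_abs, sq_abs]

lemma frob_eq_norm (A : Matrix m k ℝ) :
    frob A = ‖(WithLp.equiv 2 (m × k → ℝ)).symm (fun pq => A pq.1 pq.2)‖ := by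
  rw [EuclideanSpace.norm_eq]
  simp [frob, Real.norm_eq_abs, sq_abs, Fintype.sum_prod_type]

lemma frob_add_le (A B : Matrix m k ℝ) : frob (A + B) ≤ frob A + frob B := by
  rw [frob_eq_norm, frob_eq_norm, frob_eq_norm]
  have : ((WithLp.equiv 2 (m × k → ℝ)).symm (fun pq => (A + B) pq.1 pq.2) : EuclideanSpace ℝ (m × k))
      = (WithLp.equiv 2 (m × k → ℝ)).symm (fun pq => A pq.1 pq.2)
        + (WithLp.equiv 2 (m × k → ℝ)).symm (fun pq => B pq.1 pq.2) := rfl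
  rw [this]
  exact norm_add_le _ _

lemma frob_transpose (A : Matrix m k ℝ) : frob Aᵀ = frob A := by
  unfold frob
  rw [Finset.sum_comm]
  simp [transpose_apply]

lemma vnorm_eq_zero {v : m → ℝ} (h : vnorm v = 0) : v = 0 := by
  have h2 : ∑ i, v i ^ 2 = 0 := by
    have := vnorm_sq v
    rw [h] at this
    simpa using this.symm
  funext i
  have := (Finset.sum_eq_zero_iff_of_nonneg (fun _ _ => sq_nonneg (v _))).mp h2 i (Finset.mem_univ i)
  exact pow_eq_zero_iff (by norm_num) |>.mp this

lemma vnorm_smul (c : ℝ) (v : m → ℝ) : vnorm (c • v) = |c| * vnorm v := by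
  rw [vnorm_eq_norm, vnorm_eq_norm]
  have : ((WithLp.equiv 2 (m → ℝ)).symm (c • v) : EuclideanSpace ℝ m)
      = c • (WithLp.equiv 2 (m → ℝ)).symm v := rfl
  rw [this, norm_smul, Real.norm_eq_abs]

lemma vnorm_mulVec_le_frob (A : Matrix m k ℝ) (x : k → ℝ) :
    vnorm (A.mulVec x) ≤ frob A * vnorm x := by
  have h1 : ∑ i, (A.mulVec x) i ^ 2 ≤ (∑ i, ∑ j, A i j ^ 2) * ∑ j, x j ^ 2 := by
    rw [Finset.sum_mul]
    apply Finset.sum_le_sum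
    intro i _
    have := Finset.sum_mul_sq_le_sq_mul_sq Finset.univ (fun j => A i j) x
    simpa [Matrix.mulVec, dotProduct] using this
  calc vnorm (A.mulVec x) ≤ Real.sqrt ((∑ i, ∑ j, A i j ^ 2) * ∑ j, x j ^ 2) :=
        Real.sqrt_le_sqrt h1
    _ = frob A * vnorm x := Real.sqrt_mul (Finset.sum_nonneg fun _ _ =>
        Finset.sum_nonneg fun _ _ => sq_nonneg _) _

lemma specSet_bddAbove (A : Matrix m k ℝ) :
    BddAbove {c | ∃ x : k → ℝ, vnorm x = 1 ∧ c = vnorm (A.mulVec x)} := by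
  refine ⟨frob A, fun c hc => ?_⟩
  obtain ⟨x, hx, rfl⟩ := hc
  calc vnorm (A.mulVec x) ≤ frob A * vnorm x := vnorm_mulVec_le_frob A x
    _ = frob A := by rw [hx, mul_one]

lemma specSet_nonempty [Nonempty k] (A : Matrix m k ℝ) :
    {c | ∃ x : k → ℝ, vnorm x = 1 ∧ c = vnorm (A.mulVec x)}.Nonempty := by
  classical
  set i0 := Classical.arbitrary k
  refine ⟨vnorm (A.mulVec (Pi.single i0 1)), Pi.single i0 1, ?_, rfl⟩
  unfold vnorm
  rw [show (∑ i, (Pi.single i0 1 : k → ℝ) i ^ 2) = 1 by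
    simp [Pi.single_apply]]
  exact Real.sqrt_one

lemma specNorm_nonneg (A : Matrix m k ℝ) : 0 ≤ specNorm A :=
  Real.sSup_nonneg (fun c hc => by obtain ⟨x, _, rfl⟩ := hc; exact vnorm_nonneg _)

lemma sigMin_nonneg (A : Matrix m k ℝ) : 0 ≤ sigMin A :=
  Real.sInf_nonneg (fun c hc => by obtain ⟨x, _, rfl⟩ := hc; exact vnorm_nonneg _)

lemma sigMin_le_specNorm [Nonempty k] (A : Matrix m k ℝ) : sigMin A ≤ specNorm A :=
  csInf_le_csSup (specSet_nonempty A) ⟨0, fun c hc => by obtain ⟨x, _, rfl⟩ := hc; exact vnorm_nonneg _⟩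
    (specSet_bddAbove A)

lemma vnorm_mulVec_le_specNorm [Nonempty k] (A : Matrix m k ℝ) (x : k → ℝ) :
    vnorm (A.mulVec x) ≤ specNorm A * vnorm x := by
  by_cases hx : x = 0
  · simp [hx, Matrix.mulVec_zero, vnorm, Real.sqrt_eq_zero']
  · have hv : 0 < vnorm x := by
      rcases lt_or_eq_of_le (vnorm_nonneg x) with h | h
      · exact h
      · exact absurd (vnorm_eq_zero h.symm) hx
    set c := vnorm x
    set u : k → ℝ := c⁻¹ • x with hu
    have hun : vnorm u = 1 := by
      rw [hu, vnorm_smul, abs_of_pos (inv_pos.mpr hv), inv_mul_cancel₀ hv.ne']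
    have hmem : vnorm (A.mulVec u) ∈
        {c | ∃ x : k → ℝ, vnorm x = 1 ∧ c = vnorm (A.mulVec x)} := ⟨u, hun, rfl⟩
    have hle : vnorm (A.mulVec u) ≤ specNorm A := le_csSup (specSet_bddAbove A) hmem
    have hxu : x = c • u := by
      rw [hu, smul_smul, mul_inv_cancel₀ hv.ne', one_smul]
    calc vnorm (A.mulVec x) = vnorm (c • A.mulVec u) := by
          rw [hxu, Matrix.mulVec_smul]
      _ = c * vnorm (A.mulVec u) := by rw [vnorm_smul, abs_of_pos hv]
      _ ≤ c * specNorm A := by exact mul_le_mul_of_nonneg_left hle hv.le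
      _ = specNorm A * c := mul_comm _ _

lemma frob_mul_transpose_le {q : Type*} [Fintype q] (M : Matrix m k ℝ) (N : Matrix q k ℝ)
    (K : ℝ) (hK : 0 ≤ K) (h : ∀ x, vnorm (N.mulVec x) ≤ K * vnorm x) :
    frob (M * Nᵀ) ≤ K * frob M := by
  have hentry : ∀ i j, (M * Nᵀ) i j = (N.mulVec (M i)) j := by
    intro i j
    simp [Matrix.mul_apply, Matrix.mulVec, dotProduct, mul_comm]
  have h1 : ∀ i, ∑ j, (M * Nᵀ) i j ^ 2 ≤ K ^ 2 * ∑ j, M i j ^ 2 := by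
    intro i
    have := h (M i)
    have hsq : vnorm (N.mulVec (M i)) ^ 2 ≤ (K * vnorm (M i)) ^ 2 :=
      pow_le_pow_left₀ (vnorm_nonneg _) this 2
    rw [vnorm_sq, mul_pow, vnorm_sq] at hsq
    calc ∑ j, (M * Nᵀ) i j ^ 2 = ∑ j, (N.mulVec (M i)) j ^ 2 := by
          simp_rw [hentry]
      _ ≤ K ^ 2 * ∑ j, M i j ^ 2 := hsq
  calc frob (M * Nᵀ) ≤ Real.sqrt (∑ i, K ^ 2 * ∑ j, M i j ^ 2) :=
        Real.sqrt_le_sqrt (Finset.sum_le_sum fun i _ => h1 i)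
    _ = Real.sqrt (K ^ 2 * ∑ i, ∑ j, M i j ^ 2) := by rw [Finset.mul_sum]
    _ = K * frob M := by
        rw [Real.sqrt_mul (sq_nonneg K), Real.sqrt_sq hK]; rfl

lemma vnorm_orth [DecidableEq k] {R : Matrix k k ℝ} (hR : Rᵀ * R = 1) (x : k → ℝ) :
    vnorm (R.mulVec x) = vnorm x := by
  unfold vnorm
  congr 1
  have h1 : ∑ i, (R.mulVec x) i ^ 2 = (R.mulVec x) ⬝ᵥ (R.mulVec x) := by
    simp [dotProduct, sq]
  have h2 : ∑ i, x i ^ 2 = x ⬝ᵥ x := by simp [dotProduct, sq]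
  rw [h1, h2]
  calc (R.mulVec x) ⬝ᵥ (R.mulVec x) = ((R.mulVec x) ᵥ* R) ⬝ᵥ x :=
        Matrix.dotProduct_mulVec _ _ _
  _ = x ⬝ᵥ x := by
        rw [← Matrix.vecMul_transpose, Matrix.vecMul_vecMul, hR, Matrix.vecMul_one]

end lemmas

/-- If `Dist(U, U*) ≤ ρ σ_r(U*)`, then
`‖UUᵀ - U*(U*)ᵀ‖_F ≤ (2+ρ) ρ ‖U*‖₂ σ_r(U*)`. -/
theorem stmt2 {n r : ℕ} (U Ustar : Matrix (Fin n) (Fin r) ℝ) (ρ : ℝ)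
    (hρ : 0 < ρ) (hrank : Ustar.rank = r)
    (hdist : FDist U Ustar ≤ ρ * sigMin Ustar) :
    frob (U * Uᵀ - Ustar * Ustarᵀ) ≤ (2 + ρ) * ρ * specNorm Ustar * sigMin Ustar := by
  have hs0 : 0 ≤ specNorm Ustar := specNorm_nonneg Ustar
  have hσ0 : 0 ≤ sigMin Ustar := sigMin_nonneg Ustar
  rcases Nat.eq_zero_or_pos r with hr | hr
  · subst hr
    have hz : U * Uᵀ - Ustar * Ustarᵀ = 0 := by
      ext i j
      simp [Matrix.mul_apply]
    rw [hz]
    have : frob (0 : Matrix (Fin n) (Fin n) ℝ) = 0 := by simp [frob]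
    rw [this]
    positivity
  · haveI : Nonempty (Fin r) := ⟨⟨0, hr⟩⟩
    set s := specNorm Ustar with hsdef
    set σ := sigMin Ustar with hσdef
    have hσs : σ ≤ s := sigMin_le_specNorm Ustar
    -- key step: bound for every ε > 0
    have key : ∀ ε : ℝ, ε ∈ Set.Ioi (0:ℝ) →
        frob (U * Uᵀ - Ustar * Ustarᵀ) ≤ 2 * s * (ρ * σ + ε) + (ρ * σ + ε) ^ 2 := by
      intro ε hε
      rw [Set.mem_Ioi] at hε
      have hne : {c | ∃ R : Matrix (Fin r) (Fin r) ℝ, Rᵀ * R = 1 ∧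
          c = frob (U - Ustar * R)}.Nonempty :=
        ⟨frob (U - Ustar * (1 : Matrix (Fin r) (Fin r) ℝ)),
          (1 : Matrix (Fin r) (Fin r) ℝ), by simp, rfl⟩
      have hlt : FDist U Ustar < ρ * σ + ε := lt_of_le_of_lt hdist (by linarith)
      obtain ⟨c, ⟨R, hR, rfl⟩, hc⟩ := exists_lt_of_csInf_lt hne hlt
      set N := Ustar * R with hNdef
      set Δ := U - N with hΔdef
      have hd0 : 0 ≤ frob Δ := frob_nonneg Δ
      have hRR : R * Rᵀ = 1 := mul_eq_one_comm.mp hR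
      have hNN : N * Nᵀ = Ustar * Ustarᵀ := by
        rw [hNdef, Matrix.transpose_mul]
        calc Ustar * R * (Rᵀ * Ustarᵀ) = Ustar * (R * Rᵀ) * Ustarᵀ := by
              simp only [Matrix.mul_assoc]
          _ = Ustar * Ustarᵀ := by rw [hRR, Matrix.mul_one]
      have hdecomp : U * Uᵀ - Ustar * Ustarᵀ = Δ * Nᵀ + N * Δᵀ + Δ * Δᵀ := by
        rw [← hNN, hΔdef, Matrix.transpose_sub]
        simp only [Matrix.sub_mul, Matrix.mul_sub]
        abel
      have opN : ∀ x, vnorm (N.mulVec x) ≤ s * vnorm x := by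
        intro x
        have : N.mulVec x = Ustar.mulVec (R.mulVec x) := by
          rw [hNdef, ← Matrix.mulVec_mulVec]
        rw [this]
        calc vnorm (Ustar.mulVec (R.mulVec x)) ≤ s * vnorm (R.mulVec x) :=
              vnorm_mulVec_le_specNorm Ustar _
          _ = s * vnorm x := by rw [vnorm_orth hR]
      have b1 : frob (Δ * Nᵀ) ≤ s * frob Δ := frob_mul_transpose_le Δ N s hs0 opN
      have b2 : frob (N * Δᵀ) ≤ s * frob Δ := by
        have : N * Δᵀ = (Δ * Nᵀ)ᵀ := by rw [Matrix.transpose_mul, Matrix.transpose_transpose]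
        rw [this, frob_transpose]
        exact b1
      have b3 : frob (Δ * Δᵀ) ≤ frob Δ * frob Δ :=
        frob_mul_transpose_le Δ Δ (frob Δ) hd0 (vnorm_mulVec_le_frob Δ)
      have tri : frob (U * Uᵀ - Ustar * Ustarᵀ) ≤
          frob (Δ * Nᵀ) + frob (N * Δᵀ) + frob (Δ * Δᵀ) := by
        rw [hdecomp]
        calc frob (Δ * Nᵀ + N * Δᵀ + Δ * Δᵀ) ≤
              frob (Δ * Nᵀ + N * Δᵀ) + frob (Δ * Δᵀ) := frob_add_le _ _
          _ ≤ frob (Δ * Nᵀ) + frob (N * Δᵀ) + frob (Δ * Δᵀ) := by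
              have := frob_add_le (Δ * Nᵀ) (N * Δᵀ)
              linarith
      nlinarith [hc.le, hd0, hs0, mul_le_mul hc.le hc.le hd0 (by linarith : (0:ℝ) ≤ ρ * σ + ε)]
    -- pass to the limit ε → 0⁺
    have hcont : Continuous fun ε : ℝ => 2 * s * (ρ * σ + ε) + (ρ * σ + ε) ^ 2 := by
      continuity
    have hlim : Filter.Tendsto (fun ε : ℝ => 2 * s * (ρ * σ + ε) + (ρ * σ + ε) ^ 2)
        (nhdsWithin 0 (Set.Ioi 0)) (nhds (2 * s * (ρ * σ) + (ρ * σ) ^ 2)) := by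
      have := (hcont.tendsto 0).mono_left (nhdsWithin_le_nhds (s := Set.Ioi (0:ℝ)))
      simpa using this
    have final1 : frob (U * Uᵀ - Ustar * Ustarᵀ) ≤ 2 * s * (ρ * σ) + (ρ * σ) ^ 2 :=
      ge_of_tendsto hlim (Filter.eventually_iff_exists_mem.mpr
        ⟨Set.Ioi 0, self_mem_nhdsWithin, key⟩)
    have : 2 * s * (ρ * σ) + (ρ * σ) ^ 2 ≤ (2 + ρ) * ρ * s * σ := by
      nlinarith [mul_nonneg (mul_nonneg (sq_nonneg ρ) hσ0) (sub_nonneg.mpr hσs)]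
    linarith
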